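/- Let P : U → ℝ and A : U → ℝ be differentiable functions on an open interval U, with P(y) > 1 and A(y) > 0 for all y ∈ U, and let Ψ : U → ℝ be differentiable, and K > 0. Suppose that for every y ∈ U and every t ≥ 2: Ψ(y) + K·(A(y)/(1−P(y)))·t^{1−P(y)} is constant in y (i.e., equals some function N₀(t) independent of y). Then P' ≡ 0, A' ≡ 0, and Ψ' ≡ 0 on U. -/

import Mathlib

open Filter Real

/-- The key step in Example 4.7(2) of the paper: if
`Ψ(y) + K (A(y)/(1−P(y))) t^{1−P(y)}` does not depend on `y ∈ U` for every `t ≥ 2`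
(where `P > 1`, `A > 0` on the open set `U` and all functions are differentiable),
then `P' ≡ 0`, `A' ≡ 0` and `Ψ' ≡ 0` on `U`. -/
theorem constant_family_forces_constant_parameters
    (U : Set ℝ) (hU : IsOpen U)
    (P A Ψ P' A' Ψ' : ℝ → ℝ) (K : ℝ) (hK : 0 < K)
    (hP1 : ∀ y ∈ U, 1 < P y) (hA0 : ∀ y ∈ U, 0 < A y)
    (hP : ∀ y ∈ U, HasDerivAt P (P' y) y)
    (hA : ∀ y ∈ U, HasDerivAt A (A' y) y)
    (hΨ : ∀ y ∈ U, HasDerivAt Ψ (Ψ' y) y)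
    (N₀ : ℝ → ℝ)
    (hconst : ∀ y ∈ U, ∀ t : ℝ, 2 ≤ t →
      Ψ y + K * (A y / (1 - P y)) * t ^ (1 - P y) = N₀ t) :
    ∀ y ∈ U, P' y = 0 ∧ A' y = 0 ∧ Ψ' y = 0 := by
  have key : ∀ y ∈ U, ∀ z ∈ U, P z = P y ∧ A z = A y ∧ Ψ z = Ψ y := by
    intro y hy z hz
    have hPy := hP1 y hy; have hPz := hP1 z hz
    have hAy := hA0 y hy; have hAz := hA0 z hz
    have hay : 1 - P y < 0 := by linarith
    have haz : 1 - P z < 0 := by linarith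
    set a := 1 - P y with ha_def
    set b := 1 - P z with hb_def
    set c := K * (A y / a) with hc_def
    set d := K * (A z / b) with hd_def
    have hc0 : c < 0 := by
      have h1 : A y / a < 0 := div_neg_of_pos_of_neg hAy hay
      exact mul_neg_of_pos_of_neg hK h1
    have hd0 : d < 0 := by
      have h1 : A z / b < 0 := div_neg_of_pos_of_neg hAz haz
      exact mul_neg_of_pos_of_neg hK h1
    have heq : ∀ t : ℝ, 2 ≤ t → Ψ y + c * t ^ a = Ψ z + d * t ^ b := by
      intro t ht
      rw [hc_def, hd_def, ha_def, hb_def, hconst y hy t ht, hconst z hz t ht]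
    -- Step 1: Ψ y = Ψ z via limits at infinity
    have hlim : ∀ e : ℝ, e < 0 → Tendsto (fun t : ℝ => t ^ e) atTop (nhds 0) := by
      intro e he
      have := tendsto_rpow_neg_atTop (y := -e) (by linarith)
      simpa using this
    have hty : Tendsto (fun t : ℝ => Ψ y + c * t ^ a) atTop (nhds (Ψ y)) := by
      have h := (hlim a hay).const_mul c
      have h2 := tendsto_const_nhds (x := Ψ y) (f := atTop (α := ℝ)) |>.add h
      simpa using h2
    have htz : Tendsto (fun t : ℝ => Ψ z + d * t ^ b) atTop (nhds (Ψ z)) := by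
      have h := (hlim b haz).const_mul d
      have h2 := tendsto_const_nhds (x := Ψ z) (f := atTop (α := ℝ)) |>.add h
      simpa using h2
    have hΨeq : Ψ y = Ψ z := by
      refine tendsto_nhds_unique (hty.congr' ?_) htz
      filter_upwards [eventually_ge_atTop (2 : ℝ)] with t ht
      exact heq t ht
    -- Step 2: c * t^a = d * t^b for all t ≥ 2
    have heq2 : ∀ t : ℝ, 2 ≤ t → c * t ^ a = d * t ^ b := by
      intro t ht
      have := heq t ht
      linarith
    have h2 : c * (2:ℝ) ^ a = d * (2:ℝ) ^ b := heq2 2 (by norm_num)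
    have h4 : c * (4:ℝ) ^ a = d * (4:ℝ) ^ b := heq2 4 (by norm_num)
    have h4a : (4:ℝ) ^ a = (2:ℝ) ^ a * (2:ℝ) ^ a := by
      rw [show (4:ℝ) = 2 * 2 by norm_num, Real.mul_rpow (by norm_num) (by norm_num)]
    have h4b : (4:ℝ) ^ b = (2:ℝ) ^ b * (2:ℝ) ^ b := by
      rw [show (4:ℝ) = 2 * 2 by norm_num, Real.mul_rpow (by norm_num) (by norm_num)]
    set X := (2:ℝ) ^ a with hX
    set Y := (2:ℝ) ^ b with hY
    have hX0 : 0 < X := Real.rpow_pos_of_pos (by norm_num) a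
    have hY0 : 0 < Y := Real.rpow_pos_of_pos (by norm_num) b
    rw [h4a] at h4
    rw [h4b] at h4
    -- c X = d Y and c X X = d Y Y  ⇒  X = Y
    have hXY : X = Y := by
      have : d * Y * X = d * Y * Y := by
        calc d * Y * X = c * X * X := by rw [h2]
        _ = d * (Y * Y) := by linarith [h4]
        _ = d * Y * Y := by ring
      have hdY : d * Y ≠ 0 := by
        intro h
        rw [h] at h2
        have : c * X ≠ 0 := mul_ne_zero (ne_of_lt hc0) (ne_of_gt hX0)
        exact this h2
      exact mul_left_cancel₀ hdY this
    have hab : a = b := by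
      have h1 : a ≤ b := (Real.rpow_le_rpow_left_iff (by norm_num : (1:ℝ) < 2)).1 (le_of_eq hXY)
      have h2' : b ≤ a := (Real.rpow_le_rpow_left_iff (by norm_num : (1:ℝ) < 2)).1 (le_of_eq hXY.symm)
      linarith
    have hPeq : P z = P y := by rw [ha_def, hb_def] at hab; linarith
    have hcd : c = d := by
      rw [hXY] at h2
      exact mul_right_cancel₀ (ne_of_gt hY0) h2
    have hAeq : A z = A y := by
      rw [hc_def, hd_def, hb_def, ha_def] at hcd
      rw [hPeq] at hcd
      have hne : (1 : ℝ) - P y ≠ 0 := ne_of_lt hay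
      field_simp at hcd
      linarith
    exact ⟨hPeq, hAeq, hΨeq.symm⟩
  intro y hy
  have hmem : U ∈ nhds y := hU.mem_nhds hy
  have ePf : P =ᶠ[nhds y] fun _ => P y :=
    Filter.eventuallyEq_of_mem hmem fun z hz => (key y hy z hz).1
  have eAf : A =ᶠ[nhds y] fun _ => A y :=
    Filter.eventuallyEq_of_mem hmem fun z hz => (key y hy z hz).2.1
  have eΨf : Ψ =ᶠ[nhds y] fun _ => Ψ y :=
    Filter.eventuallyEq_of_mem hmem fun z hz => (key y hy z hz).2.2
  have hP0 : HasDerivAt P 0 y := (hasDerivAt_const y (P y)).congr_of_eventuallyEq ePf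
  have hA0' : HasDerivAt A 0 y := (hasDerivAt_const y (A y)).congr_of_eventuallyEq eAf
  have hΨ0 : HasDerivAt Ψ 0 y := (hasDerivAt_const y (Ψ y)).congr_of_eventuallyEq eΨf
  exact ⟨(hP y hy).unique hP0, (hA y hy).unique hA0', (hΨ y hy).unique hΨ0⟩
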